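/- Let k ≥ 1, let ν ∈ ℝᵏ be a unit vector, let ρ_⊥ ∈ ℝᵏ satisfy ⟨ν, ρ_⊥⟩ = 0, let ε ∈ ℝ, and let z ∈ ℂ with Im z ≠ 0. For ξ ∈ ℝᵏ define F(ξ) = ε − ‖ξ‖² − 2(z⟨ν,ξ⟩ + ⟨ρ_⊥,ξ⟩) ∈ ℂ, and write ξ_⊥ = ξ − ⟨ν,ξ⟩ν. Then: (i) F is differentiable and its derivative at ξ, viewed as a real-linear map from ℝᵏ to ℂ ≅ ℝ², is surjective if and only if ξ_⊥ ≠ −ρ_⊥; (ii) if ξ_⊥ = −ρ_⊥ and Im F(ξ) = 0, then ⟨ν,ξ⟩ = 0 and F(ξ) = ε + ‖ρ_⊥‖². -/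

import Mathlib

open scoped RealInnerProductSpace

/-- Differentiability and surjectivity of the differential of the spectral parameter
`F(ξ) = ε − ‖ξ‖² − 2ρ·ξ`, `ρ = zν + ρ_⊥`, `Im z ≠ 0`: `dF(ξ) : ℝᵏ → ℂ ≅ ℝ²` is
surjective iff `ξ_⊥ ≠ −ρ_⊥`, and at `ξ_⊥ = −ρ_⊥` with `F(ξ)` real one has `⟨ν,ξ⟩ = 0`
and `F(ξ) = ε + ‖ρ_⊥‖²`. -/
theorem spectral_parameter_differential_surjective (k : ℕ) (hk : 1 ≤ k)
    (ν : EuclideanSpace ℝ (Fin k)) (hν : ‖ν‖ = 1)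
    (ρperp : EuclideanSpace ℝ (Fin k)) (hperp : ⟪ν, ρperp⟫ = 0)
    (ε : ℝ) (z : ℂ) (him : z.im ≠ 0)
    (F : EuclideanSpace ℝ (Fin k) → ℂ)
    (hF : ∀ ξ, F ξ = (ε : ℂ) - (‖ξ‖ : ℂ) ^ 2 - 2 * (z * (⟪ν, ξ⟫ : ℝ) + (⟪ρperp, ξ⟫ : ℝ))) :
    (Differentiable ℝ F ∧
      ∀ ξ, Function.Surjective (fderiv ℝ F ξ) ↔ ξ - ⟪ν, ξ⟫ • ν ≠ -ρperp) ∧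
    (∀ ξ, ξ - ⟪ν, ξ⟫ • ν = -ρperp → (F ξ).im = 0 →
      ⟪ν, ξ⟫ = 0 ∧ F ξ = (ε : ℂ) + (‖ρperp‖ : ℂ) ^ 2) := by
  have hνν : ⟪ν, ν⟫ = (1 : ℝ) := by
    rw [real_inner_self_eq_norm_sq, hν]; norm_num
  -- the derivative
  have key : ∀ ξ : EuclideanSpace ℝ (Fin k), HasFDerivAt F
      ((0 : EuclideanSpace ℝ (Fin k) →L[ℝ] ℂ) - Complex.ofRealCLM.comp (2 • innerSL ℝ ξ)
        - (2 : ℂ) • (z • Complex.ofRealCLM.comp (innerSL ℝ ν)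
            + Complex.ofRealCLM.comp (innerSL ℝ ρperp))) ξ := by
    intro ξ
    have hFeq : F = fun ξ : EuclideanSpace ℝ (Fin k) => (ε : ℂ) - ((‖ξ‖ ^ 2 : ℝ) : ℂ)
        - 2 * (z * ((Complex.ofRealCLM.comp (innerSL ℝ ν)) ξ)
            + (Complex.ofRealCLM.comp (innerSL ℝ ρperp)) ξ) := by
      funext ξ
      rw [hF]
      simp only [ContinuousLinearMap.comp_apply, innerSL_apply_apply, Complex.ofRealCLM_apply]
      push_cast
      ring
    rw [hFeq]
    have h1 : HasFDerivAt (fun ξ : EuclideanSpace ℝ (Fin k) => ((‖ξ‖ ^ 2 : ℝ) : ℂ))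
        (Complex.ofRealCLM.comp (2 • innerSL ℝ ξ)) ξ :=
      Complex.ofRealCLM.hasFDerivAt.comp ξ (hasStrictFDerivAt_norm_sq ξ).hasFDerivAt
    have h2 := (Complex.ofRealCLM.comp (innerSL ℝ ν)).hasFDerivAt (x := ξ)
    have h3 := (Complex.ofRealCLM.comp (innerSL ℝ ρperp)).hasFDerivAt (x := ξ)
    exact ((hasFDerivAt_const (ε : ℂ) ξ).sub h1).sub (((h2.const_mul z).add h3).const_mul 2)
  have hdiff : Differentiable ℝ F := fun ξ => (key ξ).differentiableAt
  have happ : ∀ ξ h : EuclideanSpace ℝ (Fin k), fderiv ℝ F ξ h =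
      -2 * (((⟪ξ, h⟫ : ℝ) : ℂ) + z * ((⟪ν, h⟫ : ℝ) : ℂ) + ((⟪ρperp, h⟫ : ℝ) : ℂ)) := by
    intro ξ h
    rw [(key ξ).fderiv]
    simp only [ContinuousLinearMap.sub_apply, ContinuousLinearMap.zero_apply,
      ContinuousLinearMap.comp_apply, ContinuousLinearMap.smul_apply,
      ContinuousLinearMap.add_apply, innerSL_apply_apply, Complex.ofRealCLM_apply,
      smul_eq_mul]
    push_cast
    ring
  refine ⟨⟨hdiff, ?_⟩, ?_⟩
  · intro ξ
    constructor
    · -- surjective → ξ⊥ ≠ -ρperp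
      intro hs hξ
      set t : ℝ := ⟪ν, ξ⟫ with ht
      have hξ' : ξ = t • ν - ρperp := by
        rw [sub_eq_iff_eq_add] at hξ
        rw [hξ]; abel
      have htz : ((t : ℂ) + z) ≠ 0 := by
        intro h0
        have := congrArg Complex.im h0
        simp at this
        exact him this
      obtain ⟨h, hh⟩ := hs (Complex.I * (-2 * ((t : ℂ) + z)))
      rw [happ] at hh
      have hinner : ⟪ξ, h⟫ = t * ⟪ν, h⟫ - ⟪ρperp, h⟫ := by
        rw [hξ', inner_sub_left, real_inner_smul_left]
      rw [hinner] at hh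
      have : ((⟪ν, h⟫ : ℝ) : ℂ) * (-2 * ((t : ℂ) + z)) = Complex.I * (-2 * ((t : ℂ) + z)) := by
        rw [← hh]; push_cast; ring
      have hc : ((⟪ν, h⟫ : ℝ) : ℂ) = Complex.I :=
        mul_right_cancel₀ (by simpa using htz) this
      have := congrArg Complex.im hc
      simp at this
    · -- ξ⊥ ≠ -ρperp → surjective
      intro hne w
      set t : ℝ := ⟪ν, ξ⟫ with ht
      set v : EuclideanSpace ℝ (Fin k) := ξ - t • ν + ρperp with hv
      have hv0 : v ≠ 0 := by
        intro h0
        exact hne (eq_neg_of_add_eq_zero_left h0)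
      have hS : (0 : ℝ) < ⟪v, v⟫ := by
        rw [real_inner_self_eq_norm_sq]
        exact pow_pos (norm_pos_iff.2 hv0) 2
      set S : ℝ := ⟪v, v⟫ with hSdef
      have hνv : ⟪ν, v⟫ = 0 := by
        rw [hv, inner_add_right, inner_sub_right, real_inner_smul_right, hνν, hperp, ← ht]
        ring
      set b : ℝ := w.im / (-2 * z.im) with hb
      set a : ℝ := -(w.re + 2 * b * (t + z.re)) / (2 * S) with ha
      refine ⟨a • v + b • ν, ?_⟩
      rw [happ]
      have h1 : ⟪ν, a • v + b • ν⟫ = b := by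
        rw [inner_add_right, real_inner_smul_right, real_inner_smul_right, hνv, hνν]; ring
      have h2 : ⟪v, a • v + b • ν⟫ = a * S := by
        rw [inner_add_right, real_inner_smul_right, real_inner_smul_right,
          real_inner_comm ν v, hνv, ← hSdef]
        ring
      have hξv : ξ = v + t • ν - ρperp := by rw [hv]; abel
      have h3 : ⟪ξ, a • v + b • ν⟫ = a * S + t * b - ⟪ρperp, a • v + b • ν⟫ := by
        rw [hξv, inner_sub_left, inner_add_left, real_inner_smul_left, h1, h2]
      rw [h1, h3]
      apply Complex.ext
      · simp only [Complex.mul_re, Complex.add_re, Complex.add_im, Complex.ofReal_re,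
          Complex.ofReal_im, Complex.mul_im, Complex.neg_re, Complex.neg_im]
        norm_num
        rw [ha]
        field_simp [hS.ne']
        ring
      · simp only [Complex.mul_im, Complex.add_re, Complex.add_im, Complex.ofReal_re,
          Complex.ofReal_im, Complex.mul_re, Complex.neg_re, Complex.neg_im]
        norm_num
        rw [hb]
        field_simp [him]
  · -- part (ii)
    intro ξ hξ hIm
    set t : ℝ := ⟪ν, ξ⟫ with ht
    have hξ' : ξ = t • ν - ρperp := by
      rw [sub_eq_iff_eq_add] at hξ
      rw [hξ]; abel
    have hnormξ : ‖ξ‖ ^ 2 = t ^ 2 + ‖ρperp‖ ^ 2 := by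
      rw [← real_inner_self_eq_norm_sq, hξ']
      simp only [inner_sub_left, inner_sub_right, real_inner_smul_left, real_inner_smul_right,
        hνν, real_inner_comm ν ρperp, hperp, real_inner_self_eq_norm_sq]
      rw [norm_smul, hν, Real.norm_eq_abs, mul_one, sq_abs]
      ring
    have hρξ : ⟪ρperp, ξ⟫ = -(‖ρperp‖ ^ 2) := by
      rw [hξ', inner_sub_right, real_inner_smul_right, real_inner_comm ν ρperp, hperp,
        real_inner_self_eq_norm_sq]
      ring
    have hFξ : F ξ = (ε : ℂ) - ((t ^ 2 + ‖ρperp‖ ^ 2 : ℝ) : ℂ)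
        - 2 * (z * (t : ℂ) + ((-(‖ρperp‖ ^ 2) : ℝ) : ℂ)) := by
      rw [hF, ← ht, hρξ]
      congr 1
      · congr 1
        rw [← hnormξ]
        push_cast
        ring
    have himF : (F ξ).im = -2 * (z.im * t) := by
      rw [hFξ]
      simp [Complex.sub_im, Complex.add_im, Complex.mul_im, pow_two]
    have ht0 : t = 0 := by
      rw [himF] at hIm
      rcases mul_eq_zero.1 (by linarith : z.im * t = 0) with h | h
      · exact absurd h him
      · exact h
    refine ⟨ht0, ?_⟩
    rw [hFξ, ht0]
    push_cast
    ring
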